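/- In any Dallajascar (φ, H, r) on S, the precedence relation is transitive: for all x, y, z : S, if x ⊐ y and y ⊐ z, then x ⊐ z. -/

import Mathlib

/-- A *Dallajascar* on a finite nonempty type `S`: a parent function `phi : S → Option S`,
an ordered-children function `H : S → List S`, and a root `r : S`, such that
(i) `phi r = none`; (ii) `phi x ≠ none` for `x ≠ r`; (iii) the transitive closure of the
parent relation is irreflexive; (iv) `H x` is a duplicate-free list whose members are
exactly the `y` with `phi y = some x`. -/
structure Dallajascar (S : Type*) [Fintype S] [Nonempty S] where
  phi : S → Option S
  H : S → List S
  r : S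
  phi_root : phi r = none
  phi_ne_none : ∀ x : S, x ≠ r → phi x ≠ none
  acyclic : ∀ x : S, ¬ Relation.TransGen (fun y z => phi y = some z) x x
  H_nodup : ∀ x : S, (H x).Nodup
  mem_H : ∀ x y : S, y ∈ H x ↔ phi y = some x

namespace Dallajascar

variable {S : Type*} [Fintype S] [Nonempty S]

/-- The parent relation: `P D y x` iff `x` is the parent of `y`. -/
def P (D : Dallajascar S) (y x : S) : Prop := D.phi y = some x

/-- `Nest D x y` : « x emboîte y », i.e. `x` is a strict ancestor of `y`. -/
def Nest (D : Dallajascar S) (x y : S) : Prop := Relation.TransGen D.P y x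

/-- `Prec D x y` : « x précède y » : there are ancestors-or-selves `x'` of `x` and `y'`
of `y` with a common parent `a`, `x'` occurring strictly before `y'` in `H a`. -/
def Prec (D : Dallajascar S) (x y : S) : Prop :=
  ∃ a x' y' : S, Relation.ReflTransGen D.P x x' ∧ Relation.ReflTransGen D.P y y' ∧
    D.phi x' = some a ∧ D.phi y' = some a ∧
    ∃ i j : ℕ, i < j ∧ (D.H a)[i]? = some x' ∧ (D.H a)[j]? = some y'

/-- Ancestors-or-selves of a common element are comparable. -/
lemma anc_comparable (D : Dallajascar S) {y u v : S}
    (h1 : Relation.ReflTransGen D.P y u) (h2 : Relation.ReflTransGen D.P y v) :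
    Relation.ReflTransGen D.P u v ∨ Relation.ReflTransGen D.P v u := by
  induction h1 with
  | refl => left; exact h2
  | @tail c u hyc hcu ih =>
    rcases ih with h | h
    · rcases h.cases_head with rfl | ⟨d, hd, hdv⟩
      · right; exact Relation.ReflTransGen.single hcu
      · have : u = d := by
          have := hcu.symm.trans hd
          exact Option.some.inj this
        left; exact this ▸ hdv
    · right; exact h.tail hcu

/-- Precedence is transitive. -/
theorem prec_trans (D : Dallajascar S) :
    ∀ x y z : S, D.Prec x y → D.Prec y z → D.Prec x z := by
  rintro x y z ⟨a, x', y', hxx', hyy', hx'a, hy'a, i, j, hij, hi, hj⟩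
    ⟨b, y'', z'', hyy'', hzz'', hy''b, hz''b, k, l, hkl, hk, hl⟩
  rcases D.anc_comparable hyy' hyy'' with h | h
  · rcases h.cases_head with rfl | ⟨c, hc, hcy''⟩
    · -- y' = y'', so a = b and j = k
      have hab : a = b := Option.some.inj (hy'a.symm.trans hy''b)
      subst hab
      have hjlen : j < (D.H a).length := (List.getElem?_eq_some_iff.1 hj).1
      have hklen : k < (D.H a).length := (List.getElem?_eq_some_iff.1 hk).1
      have hjk : j = k := by
        have h1 : (D.H a)[j] = y' := (List.getElem?_eq_some_iff.1 hj).2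
        have h2 : (D.H a)[k] = y' := (List.getElem?_eq_some_iff.1 hk).2
        exact ((D.H_nodup a).getElem_inj_iff).1 (h1.trans h2.symm)
      exact ⟨a, x', z'', hxx', hzz'', hx'a, hz''b, i, l,
        lt_trans (hjk ▸ hij) hkl, hi, hl⟩
    · -- y'' is a strict ancestor of y', so y'' is ancestor-or-self of a,
      -- hence an ancestor of x.
      have hca : c = a := Option.some.inj (hc.symm.trans hy'a)
      subst hca
      have hxy'' : Relation.ReflTransGen D.P x y'' :=
        (hxx'.tail hx'a).trans hcy''
      exact ⟨b, y'', z'', hxy'', hzz'', hy''b, hz''b, k, l, hkl, hk, hl⟩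
  · rcases h.cases_head with rfl | ⟨c, hc, hcy'⟩
    · -- same as before with b = a
      have hab : a = b := Option.some.inj (hy'a.symm.trans hy''b)
      subst hab
      have hjlen : j < (D.H a).length := (List.getElem?_eq_some_iff.1 hj).1
      have hklen : k < (D.H a).length := (List.getElem?_eq_some_iff.1 hk).1
      have hjk : j = k := by
        have h1 : (D.H a)[j] = y'' := (List.getElem?_eq_some_iff.1 hj).2
        have h2 : (D.H a)[k] = y'' := (List.getElem?_eq_some_iff.1 hk).2
        exact ((D.H_nodup a).getElem_inj_iff).1 (h1.trans h2.symm)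
      exact ⟨a, x', z'', hxx', hzz'', hx'a, hz''b, i, l,
        lt_trans (hjk ▸ hij) hkl, hi, hl⟩
    · -- y' is a strict ancestor of y'', so y' is ancestor-or-self of b,
      -- hence an ancestor of z.
      have hcb : c = b := Option.some.inj (hc.symm.trans hy''b)
      subst hcb
      have hzy' : Relation.ReflTransGen D.P z y' :=
        (hzz''.tail hz''b).trans hcy'
      exact ⟨a, x', y', hxx', hzy', hx'a, hy'a, i, j, hij, hi, hj⟩

end Dallajascar
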